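/- If in addition c_in and c_out are nowhere zero on Ω and c_in(q) ≠ c_out(q) for every q ∈ Ω, then at every point of Ω: ∂²r/∂u∂v = (1/(c_out − c_in))·((c_out/c_in)·(∂c_in/∂v)·(∂r/∂u) − (c_in/c_out)·(∂c_out/∂u)·(∂r/∂v)). -/

import Mathlib

section Aux

/-- fderiv of a directional derivative in terms of the second fderiv. -/
lemma fderiv_fderiv_apply_const {f : ℝ × ℝ → ℝ} {q : ℝ × ℝ}
    (hf : DifferentiableAt ℝ (fderiv ℝ f) q) (a b : ℝ × ℝ) :
    fderiv ℝ (fun p => fderiv ℝ f p a) q b = fderiv ℝ (fderiv ℝ f) q b a := by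
  rw [fderiv_clm_apply hf (differentiableAt_const a)]
  simp

end Aux

/-- For a characteristic system `∂r/∂u = c_in·∂t/∂u`,
`∂r/∂v = c_out·∂t/∂v` on an open set `Ω ⊆ ℝ²` with `c_in, c_out` nowhere zero and
`c_in ≠ c_out` on `Ω`, the mixed second derivative of `r` satisfies
`∂²r/∂u∂v = (1/(c_out−c_in))·((c_out/c_in)·(∂c_in/∂v)·(∂r/∂u) −
(c_in/c_out)·(∂c_out/∂u)·(∂r/∂v))`. -/
theorem mixed_derivative_r
    (Ω : Set (ℝ × ℝ)) (hΩ : IsOpen Ω)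
    (t r cin cout : ℝ × ℝ → ℝ)
    (ht : ContDiffOn ℝ 2 t Ω) (hr : ContDiffOn ℝ 2 r Ω)
    (hcin : ∀ q ∈ Ω, DifferentiableAt ℝ cin q)
    (hcout : ∀ q ∈ Ω, DifferentiableAt ℝ cout q)
    (hchar_u : ∀ q ∈ Ω, fderiv ℝ r q (1, 0) = cin q * fderiv ℝ t q (1, 0))
    (hchar_v : ∀ q ∈ Ω, fderiv ℝ r q (0, 1) = cout q * fderiv ℝ t q (0, 1))
    (hcin0 : ∀ q ∈ Ω, cin q ≠ 0) (hcout0 : ∀ q ∈ Ω, cout q ≠ 0)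
    (hne : ∀ q ∈ Ω, cin q ≠ cout q) :
    ∀ q ∈ Ω,
      fderiv ℝ (fun q => fderiv ℝ r q (0, 1)) q (1, 0) =
        (1 / (cout q - cin q)) *
          ((cout q / cin q) * fderiv ℝ cin q (0, 1) * fderiv ℝ r q (1, 0) -
            (cin q / cout q) * fderiv ℝ cout q (1, 0) * fderiv ℝ r q (0, 1)) := by
  intro q hq
  have hqn : Ω ∈ nhds q := hΩ.mem_nhds hq
  have htq : ContDiffAt ℝ 2 t q := ht.contDiffAt hqn
  have hrq : ContDiffAt ℝ 2 r q := hr.contDiffAt hqn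
  have htf : DifferentiableAt ℝ (fderiv ℝ t) q :=
    (htq.fderiv_right (m := 1) le_rfl).differentiableAt one_ne_zero
  have hrf : DifferentiableAt ℝ (fderiv ℝ r) q :=
    (hrq.fderiv_right (m := 1) le_rfl).differentiableAt one_ne_zero
  -- directional derivative functions of t are differentiable
  have dtu : DifferentiableAt ℝ (fun p => fderiv ℝ t p ((1 : ℝ), (0 : ℝ))) q :=
    htf.clm_apply (differentiableAt_const _)
  have dtv : DifferentiableAt ℝ (fun p => fderiv ℝ t p ((0 : ℝ), (1 : ℝ))) q :=
    htf.clm_apply (differentiableAt_const _)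
  -- symmetry of second derivatives
  have hsymt : IsSymmSndFDerivAt ℝ t q := htq.isSymmSndFDerivAt (by simp [minSmoothness_of_isRCLikeNormedField])
  have hsymr : IsSymmSndFDerivAt ℝ r q := hrq.isSymmSndFDerivAt (by simp [minSmoothness_of_isRCLikeNormedField])
  -- mixed second derivative notations
  set tu := fderiv ℝ t q (1, 0) with htu
  set tv := fderiv ℝ t q (0, 1) with htv
  set M := fderiv ℝ (fderiv ℝ t) q (1, 0) (0, 1) with hM
  -- the v-equation differentiated in u direction:
  have hv_eq : (fun p => fderiv ℝ r p ((0 : ℝ), (1 : ℝ))) =ᶠ[nhds q]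
      (fun p => cout p * fderiv ℝ t p ((0 : ℝ), (1 : ℝ))) := by
    filter_upwards [hqn] with p hp using hchar_v p hp
  have hu_eq : (fun p => fderiv ℝ r p ((1 : ℝ), (0 : ℝ))) =ᶠ[nhds q]
      (fun p => cin p * fderiv ℝ t p ((1 : ℝ), (0 : ℝ))) := by
    filter_upwards [hqn] with p hp using hchar_u p hp
  have E1 : fderiv ℝ (fun p => fderiv ℝ r p ((0 : ℝ), (1 : ℝ))) q (1, 0) =
      fderiv ℝ cout q (1, 0) * tv + cout q * M := by
    rw [hv_eq.fderiv_eq, fderiv_fun_mul (hcout q hq) dtv]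
    have : fderiv ℝ (fun p => fderiv ℝ t p ((0 : ℝ), (1 : ℝ))) q (1, 0) = M := by
      rw [fderiv_fderiv_apply_const htf]
    simp only [ContinuousLinearMap.add_apply, ContinuousLinearMap.smul_apply, smul_eq_mul]
    rw [this]; ring
  have E2 : fderiv ℝ (fun p => fderiv ℝ r p ((1 : ℝ), (0 : ℝ))) q (0, 1) =
      fderiv ℝ cin q (0, 1) * tu + cin q * M := by
    rw [hu_eq.fderiv_eq, fderiv_fun_mul (hcin q hq) dtu]
    have : fderiv ℝ (fun p => fderiv ℝ t p ((1 : ℝ), (0 : ℝ))) q (0, 1) = M := by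
      rw [fderiv_fderiv_apply_const htf]
      exact hsymt (0, 1) (1, 0)
    simp only [ContinuousLinearMap.add_apply, ContinuousLinearMap.smul_apply, smul_eq_mul]
    rw [this]; ring
  -- equality of the two mixed derivatives of r
  have Esym : fderiv ℝ (fun p => fderiv ℝ r p ((0 : ℝ), (1 : ℝ))) q (1, 0) =
      fderiv ℝ (fun p => fderiv ℝ r p ((1 : ℝ), (0 : ℝ))) q (0, 1) := by
    rw [fderiv_fderiv_apply_const hrf, fderiv_fderiv_apply_const hrf]
    exact hsymr (1, 0) (0, 1)
  -- algebra
  have hru : fderiv ℝ r q (1, 0) = cin q * tu := hchar_u q hq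
  have hrv : fderiv ℝ r q (0, 1) = cout q * tv := hchar_v q hq
  have hcin' := hcin0 q hq
  have hcout' := hcout0 q hq
  have hsub : cout q - cin q ≠ 0 := sub_ne_zero.mpr (Ne.symm (hne q hq))
  rw [E1, hru, hrv]
  rw [E1, E2] at Esym
  field_simp
  linear_combination (cout q) * Esym
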